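/- Let d ≥ 1 be an integer, α ∈ (0, d), and 1 < q ≤ p with p ≤ d. Let b : ℝ^d → [0,∞) be measurable and A ≥ 0 satisfy ∫_B b^p dx ≤ A^p ρ^{d - pα} for every ρ > 0 and every ball B of radius ρ. Then pointwise on ℝ^d one has R_α(b^q) ≤ N A (𝕄(b^q))^{1 - 1/q}, where N depends only on α, d, q, p. -/

import Mathlib

open MeasureTheory Metric ENNReal
open scoped FourierTransform

namespace RieszProofAux

section
variable {d : ℕ}


/-- Dyadic location (upward). -/
lemma exists_dyadic_ge {δ s : ℝ} (hδ : 0 < δ) (hs : δ ≤ s) :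
    ∃ k : ℕ, δ * 2 ^ (k : ℝ) ≤ s ∧ s < δ * 2 ^ ((k : ℝ) + 1) := by
  have hs0 : 0 < s := lt_of_lt_of_le hδ hs
  set t : ℝ := s / δ with ht
  have ht1 : 1 ≤ t := (one_le_div hδ).2 hs
  have ht0 : 0 < t := lt_of_lt_of_le one_pos ht1
  set L : ℝ := Real.logb 2 t with hL
  have hL0 : 0 ≤ L := Real.logb_nonneg one_lt_two ht1
  have h0 : ((⌊L⌋.toNat : ℝ)) = ((⌊L⌋ : ℤ) : ℝ) := by
    exact_mod_cast congrArg (fun n : ℤ => (n : ℝ)) (Int.toNat_of_nonneg (Int.floor_nonneg.2 hL0))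
  refine ⟨⌊L⌋.toNat, ?_, ?_⟩
  · have h1 : ((⌊L⌋.toNat : ℝ)) ≤ L := by
      rw [h0]; exact Int.floor_le L
    have h2 : (2:ℝ) ^ ((⌊L⌋.toNat : ℝ)) ≤ 2 ^ L :=
      Real.rpow_le_rpow_of_exponent_le one_le_two h1
    rw [Real.rpow_logb two_pos (by norm_num) ht0] at h2
    calc δ * 2 ^ ((⌊L⌋.toNat : ℝ)) ≤ δ * t := by nlinarith
    _ = s := by rw [ht]; field_simp
  · have h1 : L < ((⌊L⌋.toNat : ℝ)) + 1 := by
      rw [h0]; exact Int.lt_floor_add_one L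
    have h2 : (2:ℝ) ^ L < 2 ^ (((⌊L⌋.toNat : ℝ)) + 1) :=
      Real.rpow_lt_rpow_of_exponent_lt one_lt_two h1
    rw [Real.rpow_logb two_pos (by norm_num) ht0] at h2
    calc s = δ * t := by rw [ht]; field_simp
    _ < δ * 2 ^ (((⌊L⌋.toNat : ℝ)) + 1) := by nlinarith

/-- Dyadic location (downward). -/
lemma exists_dyadic_lt {δ s : ℝ} (hs0 : 0 < s) (hs : s < δ) :
    ∃ k : ℕ, δ * 2 ^ (-((k : ℝ) + 1)) < s ∧ s ≤ δ * 2 ^ (-(k : ℝ)) := by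
  have hδ : 0 < δ := hs0.trans hs
  have hu1 : 1 ≤ δ / s := (one_le_div hs0).2 hs.le
  obtain ⟨k, hk1, hk2⟩ := exists_dyadic_ge one_pos (by simpa using hu1)
  rw [one_mul] at hk1 hk2
  refine ⟨k, ?_, ?_⟩
  · have h2 : (0:ℝ) < 2 ^ ((k:ℝ) + 1) := Real.rpow_pos_of_pos two_pos _
    rw [Real.rpow_neg two_pos.le]
    rw [div_lt_iff₀ hs0] at hk2
    rw [mul_inv_lt_iff₀ h2]
    nlinarith
  · have h2 : (0:ℝ) < 2 ^ (k:ℝ) := Real.rpow_pos_of_pos two_pos _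
    rw [Real.rpow_neg two_pos.le]
    rw [le_div_iff₀ hs0] at hk1
    rw [le_mul_inv_iff₀ h2]
    nlinarith

/-- Geometric sum of `ofReal`s. -/
lemma tsum_ofReal_geometric {C r : ℝ} (hC : 0 ≤ C) (hr0 : 0 ≤ r) (hr1 : r < 1) :
    ∑' k : ℕ, ENNReal.ofReal (C * r ^ k) = ENNReal.ofReal (C / (1 - r)) := by
  have h1 : ∀ k : ℕ, ENNReal.ofReal (C * r ^ k)
      = ENNReal.ofReal C * (ENNReal.ofReal r) ^ k := by
    intro k
    rw [ENNReal.ofReal_mul hC, ENNReal.ofReal_pow hr0]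
  simp_rw [h1]
  rw [ENNReal.tsum_mul_left, ENNReal.tsum_geometric]
  rw [div_eq_mul_inv, ENNReal.ofReal_mul hC, ENNReal.ofReal_inv_of_pos (by linarith)]
  congr 1
  rw [ENNReal.ofReal_sub 1 hr0, ENNReal.ofReal_one]

/-- Annulus estimate. -/
lemma annulus_bound {α : ℝ} (hαd : α - (d:ℝ) ≤ 0)
    (g : EuclideanSpace ℝ (Fin d) → ℝ≥0∞) (hg : Measurable g)
    (x : EuclideanSpace ℝ (Fin d)) {a r : ℝ} (ha : 0 < a)
    (S : Set (EuclideanSpace ℝ (Fin d))) (hSm : MeasurableSet S)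
    (hS : ∀ y ∈ S, a ≤ ‖y‖ ∧ ‖y‖ < r) :
    ∫⁻ y in S, g (x + y) * ENNReal.ofReal (‖y‖ ^ (α - (d:ℝ)))
      ≤ ENNReal.ofReal (a ^ (α - (d:ℝ))) * ∫⁻ z in ball x r, g z := by
  have step1 : ∫⁻ y in S, g (x + y) * ENNReal.ofReal (‖y‖ ^ (α - (d:ℝ)))
      ≤ ∫⁻ y in S, ENNReal.ofReal (a ^ (α - (d:ℝ))) * g (x + y) := by
    refine setLIntegral_mono (by fun_prop) ?_
    intro y hy
    rw [mul_comm]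
    exact mul_le_mul' (ENNReal.ofReal_le_ofReal
      (Real.rpow_le_rpow_of_nonpos ha (hS y hy).1 hαd)) le_rfl
  refine step1.trans ?_
  rw [lintegral_const_mul' _ _ ENNReal.ofReal_ne_top]
  refine mul_le_mul' le_rfl ?_
  have hsub : S ⊆ (fun y => x + y) ⁻¹' (ball x r) := by
    intro y hy
    simp only [Set.mem_preimage, mem_ball]
    rw [dist_eq_norm]
    simpa using (hS y hy).2
  calc ∫⁻ y in S, g (x + y) ≤ ∫⁻ y in (fun y => x + y) ⁻¹' (ball x r), g (x + y) :=
        lintegral_mono_set hsub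
  _ = ∫⁻ z in ball x r, g z :=
        (measurePreserving_add_left volume x).setLIntegral_comp_preimage_emb
          (MeasurableEquiv.addLeft x).measurableEmbedding g (ball x r)

/-- The maximal function bound on ball integrals. -/
lemma lintegral_ball_le_maxFun (g : EuclideanSpace ℝ (Fin d) → ℝ≥0∞)
    (x z : EuclideanSpace ℝ (Fin d)) {r : ℝ} (hx : x ∈ ball z r) :
    ∫⁻ y in ball z r, g y ≤
      (⨆ (z' : EuclideanSpace ℝ (Fin d)) (r' : ℝ) (_ : x ∈ ball z' r'),
        (∫⁻ y in ball z' r', g y) / volume (ball z' r')) * volume (ball z r) := by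
  have hr : 0 < r := pos_of_mem_ball hx
  have h1 : (∫⁻ y in ball z r, g y) / volume (ball z r) ≤
      ⨆ (z' : EuclideanSpace ℝ (Fin d)) (r' : ℝ) (_ : x ∈ ball z' r'),
        (∫⁻ y in ball z' r', g y) / volume (ball z' r') :=
    le_iSup_of_le z <| le_iSup_of_le r <| le_iSup_of_le hx le_rfl
  rwa [ENNReal.div_le_iff (measure_ball_pos volume z hr).ne' measure_ball_lt_top.ne] at h1

/-- If `g = 0` a.e. then the Riesz-type integral vanishes. -/
lemma lintegral_shift_zero (g : EuclideanSpace ℝ (Fin d) → ℝ≥0∞)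
    (hg : g =ᵐ[volume] 0) (x : EuclideanSpace ℝ (Fin d)) (c : EuclideanSpace ℝ (Fin d) → ℝ≥0∞) :
    ∫⁻ y, g (x + y) * c y = 0 := by
  have h1 : (fun y => g (x + y)) =ᵐ[volume] 0 :=
    (measurePreserving_add_left volume x).quasiMeasurePreserving.ae_eq_comp hg
  have h2 : (fun y => g (x + y) * c y) =ᵐ[volume] 0 := by
    filter_upwards [h1] with y hy
    simp only [Pi.zero_apply] at hy ⊢
    rw [hy, zero_mul]
  rw [lintegral_congr_ae h2]
  simp

-- tail term real calculation
lemma tail_term_calc {α q δ B : ℝ} (hδ : 0 < δ) (hB : 0 ≤ B) (dd : ℝ) (k : ℕ) :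
    (δ * 2 ^ (k:ℝ)) ^ (α - dd) * (B * (δ * 2 ^ ((k:ℝ) + 1)) ^ (dd - q * α)) =
    (B * 2 ^ (dd - q * α) * δ ^ (α - q * α)) * (2 ^ (α - q * α)) ^ k := by
  have h2 : (0:ℝ) < 2 := two_pos
  have e1 : (δ * 2 ^ (k:ℝ)) ^ (α - dd) = δ ^ (α - dd) * 2 ^ ((k:ℝ) * (α - dd)) := by
    rw [Real.mul_rpow hδ.le (Real.rpow_nonneg h2.le _), ← Real.rpow_mul h2.le]
  have e2 : (δ * 2 ^ ((k:ℝ) + 1)) ^ (dd - q * α)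
      = δ ^ (dd - q * α) * 2 ^ (((k:ℝ) + 1) * (dd - q * α)) := by
    rw [Real.mul_rpow hδ.le (Real.rpow_nonneg h2.le _), ← Real.rpow_mul h2.le]
  have e3 : ((2:ℝ) ^ (α - q * α)) ^ k = 2 ^ ((α - q * α) * (k:ℝ)) := by
    rw [← Real.rpow_natCast ((2:ℝ) ^ (α - q * α)) k, ← Real.rpow_mul h2.le]
  rw [e1, e2, e3]
  have e4 : δ ^ (α - dd) * δ ^ (dd - q * α) = δ ^ (α - q * α) := by
    rw [← Real.rpow_add hδ]; ring_nf
  have e5 : (2:ℝ) ^ ((k:ℝ) * (α - dd)) * 2 ^ (((k:ℝ) + 1) * (dd - q * α))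
      = 2 ^ (dd - q * α) * 2 ^ ((α - q * α) * (k:ℝ)) := by
    rw [← Real.rpow_add h2, ← Real.rpow_add h2]; ring_nf
  calc δ ^ (α - dd) * 2 ^ ((k:ℝ) * (α - dd)) *
        (B * (δ ^ (dd - q * α) * 2 ^ (((k:ℝ) + 1) * (dd - q * α))))
      = B * (δ ^ (α - dd) * δ ^ (dd - q * α)) *
        (2 ^ ((k:ℝ) * (α - dd)) * 2 ^ (((k:ℝ) + 1) * (dd - q * α))) := by ring
    _ = B * δ ^ (α - q * α) * (2 ^ (dd - q * α) * 2 ^ ((α - q * α) * (k:ℝ))) := by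
        rw [e4, e5]
    _ = B * 2 ^ (dd - q * α) * δ ^ (α - q * α) * 2 ^ ((α - q * α) * (k:ℝ)) := by ring

-- near term real calculation
lemma near_term_calc {α δ w : ℝ} (hδ : 0 < δ) (hw : 0 ≤ w) (dd : ℝ) (k : ℕ) :
    (δ * 2 ^ (-((k:ℝ) + 1))) ^ (α - dd) * (w * (2 * (δ * 2 ^ (-(k:ℝ)))) ^ dd) =
    (w * 2 ^ (2 * dd - α) * δ ^ α) * (2 ^ (-α)) ^ k := by
  have h2 : (0:ℝ) < 2 := two_pos
  have e1 : (δ * 2 ^ (-((k:ℝ) + 1))) ^ (α - dd)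
      = δ ^ (α - dd) * 2 ^ ((-((k:ℝ) + 1)) * (α - dd)) := by
    rw [Real.mul_rpow hδ.le (Real.rpow_nonneg h2.le _), ← Real.rpow_mul h2.le]
  have e0 : 2 * (δ * 2 ^ (-(k:ℝ))) = δ * 2 ^ (1 - (k:ℝ)) := by
    rw [show (1 : ℝ) - (k:ℝ) = 1 + (-(k:ℝ)) by ring, Real.rpow_add h2, Real.rpow_one]
    ring
  have e2 : (δ * 2 ^ (1 - (k:ℝ))) ^ dd = δ ^ dd * 2 ^ ((1 - (k:ℝ)) * dd) := by
    rw [Real.mul_rpow hδ.le (Real.rpow_nonneg h2.le _), ← Real.rpow_mul h2.le]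
  have e3 : ((2:ℝ) ^ (-α)) ^ k = 2 ^ ((-α) * (k:ℝ)) := by
    rw [← Real.rpow_natCast ((2:ℝ) ^ (-α)) k, ← Real.rpow_mul h2.le]
  rw [e0, e1, e2, e3]
  have e4 : δ ^ (α - dd) * δ ^ dd = δ ^ α := by
    rw [← Real.rpow_add hδ]; ring_nf
  have e5 : (2:ℝ) ^ ((-((k:ℝ) + 1)) * (α - dd)) * 2 ^ ((1 - (k:ℝ)) * dd)
      = 2 ^ (2 * dd - α) * 2 ^ ((-α) * (k:ℝ)) := by
    rw [← Real.rpow_add h2, ← Real.rpow_add h2]; ring_nf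
  calc δ ^ (α - dd) * 2 ^ ((-((k:ℝ) + 1)) * (α - dd)) * (w * (δ ^ dd * 2 ^ ((1 - (k:ℝ)) * dd)))
      = w * (δ ^ (α - dd) * δ ^ dd) *
        (2 ^ ((-((k:ℝ) + 1)) * (α - dd)) * 2 ^ ((1 - (k:ℝ)) * dd)) := by ring
    _ = w * δ ^ α * (2 ^ (2 * dd - α) * 2 ^ ((-α) * (k:ℝ))) := by rw [e4, e5]
    _ = w * 2 ^ (2 * dd - α) * δ ^ α * 2 ^ ((-α) * (k:ℝ)) := by ring


/-- Tail estimate. -/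
lemma tail_bound {α q : ℝ} (hαd : α - (d:ℝ) ≤ 0) (hq : 1 < q) (hα0 : 0 < α)
    (g : EuclideanSpace ℝ (Fin d) → ℝ≥0∞) (hg : Measurable g)
    (x : EuclideanSpace ℝ (Fin d)) {δ B : ℝ} (hδ : 0 < δ) (hB : 0 ≤ B)
    (hmor : ∀ r : ℝ, 0 < r → ∫⁻ z in ball x r, g z ≤ ENNReal.ofReal (B * r ^ ((d:ℝ) - q * α))) :
    ∫⁻ y in {y : EuclideanSpace ℝ (Fin d) | δ ≤ ‖y‖},
        g (x + y) * ENNReal.ofReal (‖y‖ ^ (α - (d:ℝ)))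
      ≤ ENNReal.ofReal ((B * 2 ^ ((d:ℝ) - q * α) * δ ^ (α - q * α)) / (1 - 2 ^ (α - q * α))) := by
  set F : EuclideanSpace ℝ (Fin d) → ℝ≥0∞ :=
    fun y => g (x + y) * ENNReal.ofReal (‖y‖ ^ (α - (d:ℝ))) with hF
  set T : ℕ → Set (EuclideanSpace ℝ (Fin d)) :=
    fun k => {y | δ * 2 ^ (k:ℝ) ≤ ‖y‖ ∧ ‖y‖ < δ * 2 ^ ((k:ℝ) + 1)} with hT
  have hcov : {y : EuclideanSpace ℝ (Fin d) | δ ≤ ‖y‖} ⊆ ⋃ k, T k := by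
    intro y hy
    obtain ⟨k, h1, h2⟩ := exists_dyadic_ge hδ hy
    exact Set.mem_iUnion.2 ⟨k, h1, h2⟩
  have hTm : ∀ k, MeasurableSet (T k) := by
    intro k
    have he : T k = (fun y : EuclideanSpace ℝ (Fin d) => ‖y‖) ⁻¹'
        (Set.Ico (δ * 2 ^ (k:ℝ)) (δ * 2 ^ ((k:ℝ)+1))) := rfl
    rw [he]
    exact measurable_norm measurableSet_Ico
  calc ∫⁻ y in {y : EuclideanSpace ℝ (Fin d) | δ ≤ ‖y‖}, F y
      ≤ ∫⁻ y in ⋃ k, T k, F y := lintegral_mono_set hcov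
    _ ≤ ∑' k, ∫⁻ y in T k, F y := lintegral_iUnion_le T F
    _ ≤ ∑' k : ℕ, ENNReal.ofReal ((B * 2 ^ ((d:ℝ) - q * α) * δ ^ (α - q * α)) *
          (2 ^ (α - q * α)) ^ k) := by
        refine ENNReal.tsum_le_tsum fun k => ?_
        have hak : 0 < δ * 2 ^ (k:ℝ) := mul_pos hδ (Real.rpow_pos_of_pos two_pos _)
        have hrk : 0 < δ * 2 ^ ((k:ℝ) + 1) := mul_pos hδ (Real.rpow_pos_of_pos two_pos _)
        have h1 := annulus_bound hαd g hg x hak (T k) (hTm k) (fun y hy => hy)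
        refine h1.trans ?_
        have h2 := hmor _ hrk
        calc ENNReal.ofReal ((δ * 2 ^ (k:ℝ)) ^ (α - (d:ℝ))) * ∫⁻ z in ball x (δ * 2 ^ ((k:ℝ)+1)), g z
            ≤ ENNReal.ofReal ((δ * 2 ^ (k:ℝ)) ^ (α - (d:ℝ))) *
              ENNReal.ofReal (B * (δ * 2 ^ ((k:ℝ)+1)) ^ ((d:ℝ) - q * α)) :=
              mul_le_mul' le_rfl h2
          _ = ENNReal.ofReal ((δ * 2 ^ (k:ℝ)) ^ (α - (d:ℝ)) *
              (B * (δ * 2 ^ ((k:ℝ)+1)) ^ ((d:ℝ) - q * α))) :=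
              (ENNReal.ofReal_mul (Real.rpow_nonneg hak.le _)).symm
          _ = ENNReal.ofReal ((B * 2 ^ ((d:ℝ) - q * α) * δ ^ (α - q * α)) *
              (2 ^ (α - q * α)) ^ k) := by rw [tail_term_calc hδ hB]
    _ = ENNReal.ofReal ((B * 2 ^ ((d:ℝ) - q * α) * δ ^ (α - q * α)) / (1 - 2 ^ (α - q * α))) := by
        refine tsum_ofReal_geometric ?_ ?_ ?_
        · positivity
        · positivity
        · refine Real.rpow_lt_one_of_one_lt_of_neg one_lt_two ?_
          nlinarith

/-- Near estimate. -/
lemma near_bound {α : ℝ} (hαd : α - (d:ℝ) < 0) (hα0 : 0 < α)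
    (g : EuclideanSpace ℝ (Fin d) → ℝ≥0∞) (hg : Measurable g)
    (x : EuclideanSpace ℝ (Fin d)) {δ w : ℝ} (hδ : 0 < δ) (hw : 0 ≤ w) (M : ℝ≥0∞)
    (hmor : ∀ r : ℝ, 0 < r → ∫⁻ z in ball x r, g z ≤ M * ENNReal.ofReal (w * r ^ (d:ℝ))) :
    ∫⁻ y in {y : EuclideanSpace ℝ (Fin d) | ‖y‖ < δ},
        g (x + y) * ENNReal.ofReal (‖y‖ ^ (α - (d:ℝ)))
      ≤ M * ENNReal.ofReal ((w * 2 ^ (2 * (d:ℝ) - α) * δ ^ α) / (1 - 2 ^ (-α))) := by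
  set F : EuclideanSpace ℝ (Fin d) → ℝ≥0∞ :=
    fun y => g (x + y) * ENNReal.ofReal (‖y‖ ^ (α - (d:ℝ))) with hF
  set S : ℕ → Set (EuclideanSpace ℝ (Fin d)) :=
    fun k => {y | δ * 2 ^ (-((k:ℝ) + 1)) < ‖y‖ ∧ ‖y‖ ≤ δ * 2 ^ (-(k:ℝ))} with hS
  have hcov : {y : EuclideanSpace ℝ (Fin d) | ‖y‖ < δ} ⊆ {(0 : EuclideanSpace ℝ (Fin d))} ∪ ⋃ k, S k := by
    intro y hy
    rcases eq_or_ne y 0 with h | h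
    · exact Or.inl h
    · refine Or.inr ?_
      obtain ⟨k, h1, h2⟩ := exists_dyadic_lt (norm_pos_iff.2 h) hy
      exact Set.mem_iUnion.2 ⟨k, h1, h2⟩
  have hz : ∫⁻ y in {(0 : EuclideanSpace ℝ (Fin d))}, F y = 0 := by
    have : ∀ y ∈ ({(0 : EuclideanSpace ℝ (Fin d))} : Set _), F y = 0 := by
      intro y hy
      rcases hy with rfl
      simp [hF, Real.zero_rpow (ne_of_lt hαd)]
    rw [setLIntegral_congr_fun (measurableSet_singleton _) this]
    simp
  calc ∫⁻ y in {y : EuclideanSpace ℝ (Fin d) | ‖y‖ < δ}, F y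
      ≤ ∫⁻ y in {(0 : EuclideanSpace ℝ (Fin d))} ∪ ⋃ k, S k, F y := lintegral_mono_set hcov
    _ ≤ (∫⁻ y in {(0 : EuclideanSpace ℝ (Fin d))}, F y) + ∫⁻ y in ⋃ k, S k, F y :=
        lintegral_union_le F _ _
    _ = ∫⁻ y in ⋃ k, S k, F y := by rw [hz, zero_add]
    _ ≤ ∑' k, ∫⁻ y in S k, F y := lintegral_iUnion_le S F
    _ ≤ ∑' k : ℕ, M * ENNReal.ofReal ((w * 2 ^ (2 * (d:ℝ) - α) * δ ^ α) * (2 ^ (-α)) ^ k) := by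
        refine ENNReal.tsum_le_tsum fun k => ?_
        have hak : 0 < δ * 2 ^ (-((k:ℝ) + 1)) := mul_pos hδ (Real.rpow_pos_of_pos two_pos _)
        have hrk : 0 < 2 * (δ * 2 ^ (-(k:ℝ))) :=
          mul_pos two_pos (mul_pos hδ (Real.rpow_pos_of_pos two_pos _))
        have hSsub : ∀ y ∈ S k, δ * 2 ^ (-((k:ℝ) + 1)) ≤ ‖y‖ ∧ ‖y‖ < 2 * (δ * 2 ^ (-(k:ℝ))) := by
          intro y hy
          refine ⟨hy.1.le, lt_of_le_of_lt hy.2 ?_⟩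
          nlinarith [mul_pos hδ (Real.rpow_pos_of_pos two_pos (-(k:ℝ)))]
        have hSm : MeasurableSet (S k) := by
          have he : S k = (fun y : EuclideanSpace ℝ (Fin d) => ‖y‖) ⁻¹'
              (Set.Ioc (δ * 2 ^ (-((k:ℝ)+1))) (δ * 2 ^ (-(k:ℝ)))) := rfl
          rw [he]
          exact measurable_norm measurableSet_Ioc
        have h1 := annulus_bound hαd.le g hg x hak (S k) hSm hSsub
        refine h1.trans ?_
        have h2 := hmor _ hrk
        calc ENNReal.ofReal ((δ * 2 ^ (-((k:ℝ)+1))) ^ (α - (d:ℝ))) *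
              ∫⁻ z in ball x (2 * (δ * 2 ^ (-(k:ℝ)))), g z
            ≤ ENNReal.ofReal ((δ * 2 ^ (-((k:ℝ)+1))) ^ (α - (d:ℝ))) *
              (M * ENNReal.ofReal (w * (2 * (δ * 2 ^ (-(k:ℝ)))) ^ (d:ℝ))) :=
              mul_le_mul' le_rfl h2
          _ = M * (ENNReal.ofReal ((δ * 2 ^ (-((k:ℝ)+1))) ^ (α - (d:ℝ))) *
              ENNReal.ofReal (w * (2 * (δ * 2 ^ (-(k:ℝ)))) ^ (d:ℝ))) := by ring
          _ = M * ENNReal.ofReal ((w * 2 ^ (2 * (d:ℝ) - α) * δ ^ α) * (2 ^ (-α)) ^ k) := by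
              rw [← ENNReal.ofReal_mul (Real.rpow_nonneg hak.le _), near_term_calc hδ hw]
    _ = M * ENNReal.ofReal ((w * 2 ^ (2 * (d:ℝ) - α) * δ ^ α) / (1 - 2 ^ (-α))) := by
        rw [ENNReal.tsum_mul_left]
        congr 1
        refine tsum_ofReal_geometric (by positivity) (by positivity) ?_
        exact Real.rpow_lt_one_of_one_lt_of_neg one_lt_two (by linarith)


lemma morrey_calc {α q p ρ A w : ℝ} (hρ : 0 < ρ) (hA : 0 ≤ A) (hw : 0 ≤ w)
    (hq0 : 0 < q) (hp0 : 0 < p) (dd : ℝ) :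
    (A ^ p * ρ ^ (dd - p * α)) ^ (q / p) * (w * ρ ^ dd) ^ (1 - q / p) =
      w ^ (1 - q / p) * A ^ q * ρ ^ (dd - q * α) := by
  have h1 : (A ^ p * ρ ^ (dd - p * α)) ^ (q / p)
      = A ^ q * ρ ^ ((dd - p * α) * (q / p)) := by
    rw [Real.mul_rpow (Real.rpow_nonneg hA _) (Real.rpow_nonneg hρ.le _),
      ← Real.rpow_mul hA, ← Real.rpow_mul hρ.le,
      show p * (q / p) = q by field_simp]
  have h2 : (w * ρ ^ dd) ^ (1 - q / p) = w ^ (1 - q / p) * ρ ^ (dd * (1 - q / p)) := by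
    rw [Real.mul_rpow hw (Real.rpow_nonneg hρ.le _), ← Real.rpow_mul hρ.le]
  rw [h1, h2]
  have h3 : ρ ^ ((dd - p * α) * (q / p)) * ρ ^ (dd * (1 - q / p)) = ρ ^ (dd - q * α) := by
    rw [← Real.rpow_add hρ]
    congr 1
    field_simp
    ring
  calc A ^ q * ρ ^ ((dd - p * α) * (q / p)) * (w ^ (1 - q / p) * ρ ^ (dd * (1 - q / p)))
      = w ^ (1 - q / p) * A ^ q *
        (ρ ^ ((dd - p * α) * (q / p)) * ρ ^ (dd * (1 - q / p))) := by ring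
    _ = w ^ (1 - q / p) * A ^ q * ρ ^ (dd - q * α) := by rw [h3]

/-- Morrey condition transfers from exponent `p` to exponent `q ≤ p` via Hölder. -/
lemma morrey_qp {α q p : ℝ} (hq0 : 0 < q) (hqp : q ≤ p) (hp0 : 0 < p)
    (b : EuclideanSpace ℝ (Fin d) → ℝ) (hb : Measurable b) (hb0 : ∀ x, 0 ≤ b x)
    {A w : ℝ} (hA : 0 ≤ A) (hw : 0 ≤ w)
    (hvol : ∀ (z : EuclideanSpace ℝ (Fin d)) (ρ : ℝ), 0 < ρ →
      volume (ball z ρ) = ENNReal.ofReal (w * ρ ^ (d:ℝ)))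
    (hM : ∀ (z : EuclideanSpace ℝ (Fin d)) (ρ : ℝ), 0 < ρ →
      ∫⁻ y in ball z ρ, ENNReal.ofReal (b y ^ p) ≤
        ENNReal.ofReal (A ^ p * ρ ^ ((d:ℝ) - p * α)))
    (z : EuclideanSpace ℝ (Fin d)) (ρ : ℝ) (hρ : 0 < ρ) :
    ∫⁻ y in ball z ρ, ENNReal.ofReal (b y ^ q) ≤
      ENNReal.ofReal (w ^ (1 - q / p) * A ^ q * ρ ^ ((d:ℝ) - q * α)) := by
  have hs : (0:ℝ) ≤ q / p := div_nonneg hq0.le hp0.le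
  have ht : (0:ℝ) ≤ 1 - q / p := by
    have : q / p ≤ 1 := (div_le_one hp0).2 hqp
    linarith
  have hfmeas : Measurable fun y => ENNReal.ofReal (b y ^ p) :=
    ((Real.continuous_rpow_const hp0.le).measurable.comp hb).ennreal_ofReal
  have hpt : ∀ y : EuclideanSpace ℝ (Fin d), ENNReal.ofReal (b y ^ q) =
      (fun y => ENNReal.ofReal (b y ^ p)) y ^ (q / p) *
        ((fun _ => (1:ℝ≥0∞)) y) ^ (1 - q / p) := by
    intro y
    simp only [ENNReal.one_rpow, mul_one]
    rw [ENNReal.ofReal_rpow_of_nonneg (Real.rpow_nonneg (hb0 y) p) hs]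
    congr 1
    rw [← Real.rpow_mul (hb0 y), show p * (q / p) = q by field_simp]
  calc ∫⁻ y in ball z ρ, ENNReal.ofReal (b y ^ q)
      = ∫⁻ y in ball z ρ, (fun y => ENNReal.ofReal (b y ^ p)) y ^ (q / p) *
          ((fun _ => (1:ℝ≥0∞)) y) ^ (1 - q / p) := by
        exact lintegral_congr hpt
    _ ≤ (∫⁻ y in ball z ρ, ENNReal.ofReal (b y ^ p)) ^ (q / p) *
          (∫⁻ _ in ball z ρ, (1:ℝ≥0∞)) ^ (1 - q / p) :=
        ENNReal.lintegral_mul_norm_pow_le hfmeas.aemeasurable aemeasurable_const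
          hs ht (by ring)
    _ ≤ (ENNReal.ofReal (A ^ p * ρ ^ ((d:ℝ) - p * α))) ^ (q / p) *
          (ENNReal.ofReal (w * ρ ^ (d:ℝ))) ^ (1 - q / p) := by
        refine mul_le_mul' (ENNReal.rpow_le_rpow (hM z ρ hρ) hs) ?_
        rw [setLIntegral_one, hvol z ρ hρ]
    _ = ENNReal.ofReal ((A ^ p * ρ ^ ((d:ℝ) - p * α)) ^ (q / p) *
          (w * ρ ^ (d:ℝ)) ^ (1 - q / p)) := by
        rw [ENNReal.ofReal_rpow_of_nonneg (by positivity) hs,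
          ENNReal.ofReal_rpow_of_nonneg (by positivity) ht,
          ← ENNReal.ofReal_mul (by positivity)]
    _ = ENNReal.ofReal (w ^ (1 - q / p) * A ^ q * ρ ^ ((d:ℝ) - q * α)) := by
        rw [morrey_calc hρ hA hw hq0 hp0]

/-- If all ball integrals around a point vanish, the function vanishes a.e. -/
lemma ae_zero_of_ball_bound (g : EuclideanSpace ℝ (Fin d) → ℝ≥0∞) (hg : Measurable g)
    (x : EuclideanSpace ℝ (Fin d))
    (h : ∀ r : ℝ, 0 < r → ∫⁻ y in ball x r, g y = 0) : g =ᵐ[volume] 0 := by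
  have htot : ∫⁻ y, g y = 0 := by
    have hcov : (Set.univ : Set (EuclideanSpace ℝ (Fin d))) ⊆
        ⋃ n : ℕ, ball x ((n:ℝ) + 1) := by
      intro y _
      obtain ⟨n, hn⟩ := exists_nat_gt (dist y x)
      exact Set.mem_iUnion.2 ⟨n, by simp only [mem_ball]; linarith⟩
    have h0 : ∀ n : ℕ, ∫⁻ y in ball x ((n:ℝ) + 1), g y = 0 := fun n => h _ (by positivity)
    refine le_antisymm ?_ zero_le
    calc ∫⁻ y, g y = ∫⁻ y in Set.univ, g y := by rw [Measure.restrict_univ]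
      _ ≤ ∫⁻ y in ⋃ n : ℕ, ball x ((n:ℝ) + 1), g y := lintegral_mono_set hcov
      _ ≤ ∑' n : ℕ, ∫⁻ y in ball x ((n:ℝ) + 1), g y := lintegral_iUnion_le _ _
      _ = 0 := by simp [h0]
  exact (lintegral_eq_zero_iff hg).1 htot

end

end RieszProofAux

open RieszProofAux

/-- Riesz potential of an `ℝ≥0∞`-valued function:
`R_α g (x) = ∫ g(x+y) |y|^(α-d) dy`. -/
noncomputable def riesz {d : ℕ} (α : ℝ) (g : EuclideanSpace ℝ (Fin d) → ℝ≥0∞)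
    (x : EuclideanSpace ℝ (Fin d)) : ℝ≥0∞ :=
  ∫⁻ y, g (x + y) * ENNReal.ofReal (‖y‖ ^ (α - (d : ℝ)))

/-- Riesz potential of a real-valued function. -/
noncomputable def rieszR {d : ℕ} (α : ℝ) (f : EuclideanSpace ℝ (Fin d) → ℝ)
    (x : EuclideanSpace ℝ (Fin d)) : ℝ :=
  ∫ y, f (x + y) * ‖y‖ ^ (α - (d : ℝ))

/-- Hardy–Littlewood maximal function: sup over balls containing `x`
of the average of `g` over the ball. -/
noncomputable def maxFun {d : ℕ} (g : EuclideanSpace ℝ (Fin d) → ℝ≥0∞)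
    (x : EuclideanSpace ℝ (Fin d)) : ℝ≥0∞ :=
  ⨆ (z : EuclideanSpace ℝ (Fin d)) (r : ℝ) (_ : x ∈ ball z r),
    (∫⁻ y in ball z r, g y) / volume (ball z r)

/-- **Lemma 4.** If `1 < q ≤ p ≤ d` and `b ≥ 0` satisfies the Morrey condition with
exponent `p`, then pointwise `R_α(b^q) ≤ N A (𝕄(b^q))^(1 - 1/q)` with `N = N(α,d,q,p)`. -/
theorem riesz_le_maxFun_pow
    (d : ℕ) (hd : 1 ≤ d) (α q p : ℝ) (hα0 : 0 < α) (hαd : α < d)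
    (hq : 1 < q) (hqp : q ≤ p) (hpd : p ≤ d) :
    ∃ N : ℝ, 0 < N ∧
      ∀ b : EuclideanSpace ℝ (Fin d) → ℝ, Measurable b → (∀ x, 0 ≤ b x) →
      ∀ A : ℝ, 0 ≤ A →
      (∀ (x : EuclideanSpace ℝ (Fin d)) (ρ : ℝ), 0 < ρ →
        ∫⁻ y in ball x ρ, ENNReal.ofReal (b y ^ p) ≤
          ENNReal.ofReal (A ^ p * ρ ^ ((d : ℝ) - p * α))) →
      ∀ x : EuclideanSpace ℝ (Fin d),
        riesz α (fun y => ENNReal.ofReal (b y ^ q)) x ≤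
          ENNReal.ofReal (N * A) *
            (maxFun (fun y => ENNReal.ofReal (b y ^ q)) x) ^ (1 - 1 / q) := by
  classical
  have hq0 : (0:ℝ) < q := lt_trans one_pos hq
  have hp0 : (0:ℝ) < p := lt_of_lt_of_le hq0 hqp
  have hαd' : α - (d:ℝ) < 0 := by linarith
  -- geometric constants
  set w : ℝ := (volume (ball (0 : EuclideanSpace ℝ (Fin d)) 1)).toReal with hwdef
  have hw : 0 < w := ENNReal.toReal_pos
    (measure_ball_pos volume _ one_pos).ne' measure_ball_lt_top.ne
  have hgeo1 : (0:ℝ) < 1 - 2 ^ (-α) := by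
    have := Real.rpow_lt_one_of_one_lt_of_neg one_lt_two (neg_lt_zero.2 hα0)
    linarith
  have hgeo2 : (0:ℝ) < 1 - 2 ^ (α - q * α) := by
    have := Real.rpow_lt_one_of_one_lt_of_neg one_lt_two (show α - q * α < 0 by nlinarith)
    linarith
  set K : ℝ := w ^ (1 - q / p) with hKdef
  have hK : 0 < K := Real.rpow_pos_of_pos hw _
  set N : ℝ := w * 2 ^ (2 * (d:ℝ) - α) / (1 - 2 ^ (-α)) +
      K * 2 ^ ((d:ℝ) - q * α) / (1 - 2 ^ (α - q * α)) with hNdef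
  have hN : 0 < N := by
    have t1 : (0:ℝ) < w * 2 ^ (2 * (d:ℝ) - α) / (1 - 2 ^ (-α)) :=
      div_pos (by positivity) hgeo1
    have t2 : (0:ℝ) < K * 2 ^ ((d:ℝ) - q * α) / (1 - 2 ^ (α - q * α)) :=
      div_pos (by positivity) hgeo2
    rw [hNdef]
    exact add_pos t1 t2
  refine ⟨N, hN, ?_⟩
  intro b hb hb0 A hA hMor x
  set g : EuclideanSpace ℝ (Fin d) → ℝ≥0∞ := fun y => ENNReal.ofReal (b y ^ q) with hgdef
  have hg : Measurable g := ((Real.continuous_rpow_const hq0.le).measurable.comp hb).ennreal_ofReal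
  have hvol : ∀ (z : EuclideanSpace ℝ (Fin d)) (ρ : ℝ), 0 < ρ →
      volume (ball z ρ) = ENNReal.ofReal (w * ρ ^ (d:ℝ)) := by
    intro z ρ hρ
    rw [Measure.addHaar_ball_of_pos volume z hρ, finrank_euclideanSpace_fin,
      ← ENNReal.ofReal_toReal (measure_ball_lt_top
        (x := (0 : EuclideanSpace ℝ (Fin d))) (r := 1)).ne, ← hwdef,
      ← ENNReal.ofReal_mul (by positivity), ← Real.rpow_natCast ρ d, mul_comm]
  -- the case when b vanishes a.e.
  have zero_case : g =ᵐ[volume] 0 →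
      riesz α g x ≤ ENNReal.ofReal (N * A) * (maxFun g x) ^ (1 - 1/q) := by
    intro h0
    have : riesz α g x = 0 := lintegral_shift_zero g h0 x _
    rw [this]
    exact zero_le
  rcases eq_or_lt_of_le hA with hA0 | hApos
  · -- A = 0
    refine zero_case ?_
    have hp_zero : ∀ r : ℝ, 0 < r →
        ∫⁻ y in ball x r, ENNReal.ofReal (b y ^ p) = 0 := by
      intro r hr
      refine le_antisymm ?_ zero_le
      have := hMor x r hr
      rwa [← hA0, Real.zero_rpow hp0.ne', zero_mul, ENNReal.ofReal_zero] at this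
    have hbp : (fun y => ENNReal.ofReal (b y ^ p)) =ᵐ[volume] 0 :=
      ae_zero_of_ball_bound _ (((Real.continuous_rpow_const hp0.le).measurable.comp
        hb).ennreal_ofReal) x hp_zero
    filter_upwards [hbp] with y hy
    simp only [Pi.zero_apply, ENNReal.ofReal_eq_zero] at hy ⊢
    rcases eq_or_lt_of_le (hb0 y) with hby | hby
    · rw [hgdef]; simp [← hby, Real.zero_rpow hq0.ne']
    · exfalso
      have := Real.rpow_pos_of_pos hby p
      linarith
  -- A > 0 from here
  set M : ℝ≥0∞ := maxFun g x with hMdef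
  have hMle : ∀ r : ℝ, 0 < r → ∫⁻ y in ball x r, g y ≤ M * volume (ball x r) := by
    intro r hr
    exact lintegral_ball_le_maxFun g x x (mem_ball_self hr)
  rcases eq_or_ne M 0 with hM0 | hM0
  · refine zero_case ?_
    refine ae_zero_of_ball_bound g hg x ?_
    intro r hr
    refine le_antisymm ?_ zero_le
    have := hMle r hr
    rwa [hM0, zero_mul] at this
  rcases eq_or_ne M ⊤ with hMtop | hMtop
  · rw [hMtop, ENNReal.top_rpow_of_pos (by
      have : 1/q < 1 := by rw [div_lt_one hq0]; exact hq
      linarith), ENNReal.mul_top (by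
      simp only [ne_eq, ENNReal.ofReal_eq_zero, not_le]
      positivity)]
    exact le_top
  -- main case : 0 < M < ⊤, A > 0
  set m : ℝ := M.toReal with hmdef
  have hm : 0 < m := ENNReal.toReal_pos hM0 hMtop
  have hMm : M = ENNReal.ofReal m := (ENNReal.ofReal_toReal hMtop).symm
  set u : ℝ := A ^ q / m with hudef
  have hu : 0 < u := div_pos (Real.rpow_pos_of_pos hApos _) hm
  set δ : ℝ := u ^ (1 / (α * q)) with hδdef
  have hδ : 0 < δ := Real.rpow_pos_of_pos hu _
  have hδα : δ ^ α = u ^ (1 / q) := by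
    rw [hδdef, ← Real.rpow_mul hu.le,
      show 1 / (α * q) * α = 1 / q by field_simp; try ring]
  have hδt : δ ^ (α - q * α) = u ^ ((1 - q) / q) := by
    rw [hδdef, ← Real.rpow_mul hu.le,
      show 1 / (α * q) * (α - q * α) = (1 - q) / q by field_simp; try ring]
  -- the two key real identities
  have p1 : m * δ ^ α = A * m ^ (1 - 1 / q) := by
    rw [hδα, hudef, Real.div_rpow (Real.rpow_nonneg hA _) hm.le,
      ← Real.rpow_mul hA, show q * (1 / q) = 1 by field_simp, Real.rpow_one,
      Real.rpow_sub hm, Real.rpow_one]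
    field_simp
    try ring
  have p2 : A ^ q * δ ^ (α - q * α) = A * m ^ (1 - 1 / q) := by
    rw [hδt, hudef, Real.div_rpow (Real.rpow_nonneg hA _) hm.le,
      ← Real.rpow_mul hA, show q * ((1 - q) / q) = 1 - q by field_simp]
    rw [div_eq_mul_inv, ← Real.rpow_neg hm.le,
      show -((1 - q) / q) = 1 - 1 / q by field_simp; try ring]
    rw [← mul_assoc, ← Real.rpow_add hApos, show q + (1 - q) = 1 by ring, Real.rpow_one]
  -- Morrey condition for b^q
  have hmorg : ∀ r : ℝ, 0 < r → ∫⁻ z in ball x r, g z ≤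
      ENNReal.ofReal (K * A ^ q * r ^ ((d:ℝ) - q * α)) :=
    fun r hr => morrey_qp hq0 hqp hp0 b hb hb0 hA hw.le hvol hMor x r hr
  -- near and tail estimates
  have hmorM : ∀ r : ℝ, 0 < r → ∫⁻ z in ball x r, g z ≤
      M * ENNReal.ofReal (w * r ^ (d:ℝ)) := by
    intro r hr
    have := hMle r hr
    rwa [hvol x r hr] at this
  have hnear := near_bound hαd' hα0 g hg x hδ hw.le M hmorM
  have htail := tail_bound hαd'.le hq hα0 g hg x hδ
    (by positivity : (0:ℝ) ≤ K * A ^ q) hmorg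
  -- split the Riesz potential
  have hsmeas : MeasurableSet {y : EuclideanSpace ℝ (Fin d) | ‖y‖ < δ} := by
    have he : {y : EuclideanSpace ℝ (Fin d) | ‖y‖ < δ} =
        (fun y : EuclideanSpace ℝ (Fin d) => ‖y‖) ⁻¹' (Set.Iio δ) := rfl
    rw [he]
    exact measurable_norm measurableSet_Iio
  have hFmeas : Measurable fun y : EuclideanSpace ℝ (Fin d) =>
      g (x + y) * ENNReal.ofReal (‖y‖ ^ (α - (d:ℝ))) := by
    refine Measurable.mul (hg.comp (measurable_const_add x)) ?_
    exact (measurable_norm.pow_const _).ennreal_ofReal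
  have hsplit : riesz α g x =
      (∫⁻ y in {y : EuclideanSpace ℝ (Fin d) | ‖y‖ < δ},
        g (x + y) * ENNReal.ofReal (‖y‖ ^ (α - (d:ℝ)))) +
      ∫⁻ y in {y : EuclideanSpace ℝ (Fin d) | δ ≤ ‖y‖},
        g (x + y) * ENNReal.ofReal (‖y‖ ^ (α - (d:ℝ))) := by
    rw [riesz, ← lintegral_add_compl _ hsmeas]
    congr 1
    have hse : {y : EuclideanSpace ℝ (Fin d) | ‖y‖ < δ}ᶜ =
        {y : EuclideanSpace ℝ (Fin d) | δ ≤ ‖y‖} := by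
      ext y; simp [not_lt]
    rw [hse]
  -- conclude
  rw [hsplit]
  calc (∫⁻ y in {y : EuclideanSpace ℝ (Fin d) | ‖y‖ < δ},
        g (x + y) * ENNReal.ofReal (‖y‖ ^ (α - (d:ℝ)))) +
      ∫⁻ y in {y : EuclideanSpace ℝ (Fin d) | δ ≤ ‖y‖},
        g (x + y) * ENNReal.ofReal (‖y‖ ^ (α - (d:ℝ)))
      ≤ M * ENNReal.ofReal ((w * 2 ^ (2 * (d:ℝ) - α) * δ ^ α) / (1 - 2 ^ (-α))) +
        ENNReal.ofReal ((K * A ^ q * 2 ^ ((d:ℝ) - q * α) * δ ^ (α - q * α)) /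
          (1 - 2 ^ (α - q * α))) := add_le_add hnear htail
    _ = ENNReal.ofReal (m * ((w * 2 ^ (2 * (d:ℝ) - α) * δ ^ α) / (1 - 2 ^ (-α))) +
        (K * A ^ q * 2 ^ ((d:ℝ) - q * α) * δ ^ (α - q * α)) / (1 - 2 ^ (α - q * α))) := by
        rw [hMm, ← ENNReal.ofReal_mul hm.le, ← ENNReal.ofReal_add (by positivity) (by positivity)]
    _ = ENNReal.ofReal (N * A * m ^ (1 - 1 / q)) := by
        congr 1
        calc m * ((w * 2 ^ (2 * (d:ℝ) - α) * δ ^ α) / (1 - 2 ^ (-α))) +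
              (K * A ^ q * 2 ^ ((d:ℝ) - q * α) * δ ^ (α - q * α)) / (1 - 2 ^ (α - q * α))
            = (w * 2 ^ (2 * (d:ℝ) - α) / (1 - 2 ^ (-α))) * (m * δ ^ α) +
              (K * 2 ^ ((d:ℝ) - q * α) / (1 - 2 ^ (α - q * α))) *
                (A ^ q * δ ^ (α - q * α)) := by ring
          _ = (w * 2 ^ (2 * (d:ℝ) - α) / (1 - 2 ^ (-α))) * (A * m ^ (1 - 1/q)) +
              (K * 2 ^ ((d:ℝ) - q * α) / (1 - 2 ^ (α - q * α))) * (A * m ^ (1 - 1/q)) := by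
                rw [p1, p2]
          _ = N * A * m ^ (1 - 1 / q) := by rw [hNdef]; ring
    _ = ENNReal.ofReal (N * A) * ENNReal.ofReal (m ^ (1 - 1 / q)) := by
        rw [← ENNReal.ofReal_mul (by positivity)]
    _ = ENNReal.ofReal (N * A) * M ^ (1 - 1 / q) := by
        rw [hMm, ENNReal.ofReal_rpow_of_pos hm]
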